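/- Let {P_t} be a strongly continuous semigroup of contractions on L^p(X,μ) with generator L, 1 < p < ∞, which is analytic so that ‖L P_t f‖_{L^p} ≤ (C/t)‖f‖_{L^p}, and suppose additionally that ‖P_t f − f‖_{L^p} ≤ C' t^α ‖f‖ for all f in a subspace B with seminorm ‖·‖ and some 0 < α < 1. Then for every f ∈ B and t > 0, ‖L P_t f‖_{L^p} ≤ C'' t^{α−1} ‖f‖ with a constant C'' depending only on C, C', α. -/
import Mathlib


/-- If `P_t` is a strongly continuous contraction semigroup with generator `L` on a
Banach space (here `A t = L ∘ P_t`, with the semigroup relation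
`L P_{s+t} = (L P_s) ∘ P_t` and the analyticity bound `‖L P_t f‖ ≤ (C/t)‖f‖`), and if
the pseudo-Poincaré bound `‖P_t f − f‖ ≤ C' t^α N(f)` holds on a subspace `S` with
seminorm `N` for some `0 < α < 1`, then there is `C'' > 0` (depending only on
`C, C', α`) with `‖L P_t f‖ ≤ C'' t^{α−1} N(f)` for all `f ∈ S`, `t > 0`. -/
theorem stmt9 {E : Type*} [NormedAddCommGroup E] [NormedSpace ℝ E]
    (P A : ℝ → E →L[ℝ] E) (C C' α : ℝ) (hC : 0 < C) (hC' : 0 < C')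
    (hα0 : 0 < α) (hα1 : α < 1)
    (hcontr : ∀ t : ℝ, 0 < t → ∀ f : E, ‖P t f‖ ≤ ‖f‖)
    (hA : ∀ t : ℝ, 0 < t → ∀ f : E, ‖A t f‖ ≤ C / t * ‖f‖)
    (hcomm : ∀ s : ℝ, 0 < s → ∀ t : ℝ, 0 < t → A (s + t) = (A s).comp (P t))
    (S : Submodule ℝ E) (N : E → ℝ) (hN : ∀ f, 0 ≤ N f)
    (hPP : ∀ f ∈ S, ∀ t : ℝ, 0 < t → ‖P t f - f‖ ≤ C' * t ^ α * N f) :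
    ∃ C'' : ℝ, 0 < C'' ∧ ∀ f ∈ S, ∀ t : ℝ, 0 < t →
      ‖A t f‖ ≤ C'' * t ^ (α - 1) * N f := by

  set r : ℝ := (2:ℝ) ^ (α - 1) with hrdef
  have hr0 : 0 < r := Real.rpow_pos_of_pos two_pos _
  have hr1 : r < 1 := Real.rpow_lt_one_of_one_lt_of_neg one_lt_two (by linarith)
  have h1r : 0 < 1 - r := by linarith
  refine ⟨C * C' / (1 - r), by positivity, ?_⟩
  intro f hf t ht
  set a : ℕ → E := fun n => A ((2:ℝ) ^ n * t) f with ha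
  have hpt : ∀ n : ℕ, (0:ℝ) < 2 ^ n * t := fun n => by positivity
  have hpow : ∀ n : ℕ, ((2:ℝ) ^ n * t) ^ (α - 1) = r ^ n * t ^ (α - 1) := by
    intro n
    rw [Real.mul_rpow (by positivity) ht.le]
    congr 1
    rw [← Real.rpow_natCast (2:ℝ) n, ← Real.rpow_natCast r n, hrdef,
      ← Real.rpow_mul (by norm_num), ← Real.rpow_mul (by norm_num)]
    ring_nf
  have hstep : ∀ n : ℕ, ‖a n - a (n + 1)‖ ≤ C * C' * r ^ n * t ^ (α - 1) * N f := by
    intro n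
    have h2 : (2:ℝ) ^ (n + 1) * t = 2 ^ n * t + 2 ^ n * t := by ring
    have hck := hcomm ((2:ℝ) ^ n * t) (hpt n) ((2:ℝ) ^ n * t) (hpt n)
    have key : a (n + 1) = A ((2:ℝ) ^ n * t) (P ((2:ℝ) ^ n * t) f) := by
      simp only [ha, h2, hck, ContinuousLinearMap.comp_apply]
    have hdiff : a n - a (n + 1) = A ((2:ℝ) ^ n * t) (f - P ((2:ℝ) ^ n * t) f) := by
      rw [key]; simp [ha, map_sub]
    rw [hdiff]
    calc ‖A ((2:ℝ) ^ n * t) (f - P ((2:ℝ) ^ n * t) f)‖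
        ≤ C / ((2:ℝ) ^ n * t) * ‖f - P ((2:ℝ) ^ n * t) f‖ := hA _ (hpt n) _
      _ = C / ((2:ℝ) ^ n * t) * ‖P ((2:ℝ) ^ n * t) f - f‖ := by rw [norm_sub_rev]
      _ ≤ C / ((2:ℝ) ^ n * t) * (C' * ((2:ℝ) ^ n * t) ^ α * N f) :=
          mul_le_mul_of_nonneg_left (hPP f hf _ (hpt n)) (by positivity)
      _ = C * C' * (((2:ℝ) ^ n * t) ^ α / ((2:ℝ) ^ n * t)) * N f := by ring
      _ = C * C' * r ^ n * t ^ (α - 1) * N f := by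
          have hx : ((2:ℝ) ^ n * t) ^ α / ((2:ℝ) ^ n * t) = ((2:ℝ) ^ n * t) ^ (α - 1) := by
            rw [Real.rpow_sub (hpt n), Real.rpow_one]
          rw [hx, hpow n]; ring
  have hgeom : ∀ n : ℕ, ∑ k ∈ Finset.range n, r ^ k ≤ (1 - r)⁻¹ := by
    intro n
    rw [geom_sum_eq (ne_of_lt hr1) n]
    have h : (r ^ n - 1) / (r - 1) = (1 - r ^ n) / (1 - r) := by
      rw [← neg_div_neg_eq]; ring_nf
    rw [h, ← one_div]
    have : (0:ℝ) ≤ r ^ n := by positivity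
    exact (div_le_div_iff_of_pos_right h1r).mpr (by linarith)
  have hbound : ∀ n : ℕ, ‖a 0‖ ≤ C * C' / (1 - r) * t ^ (α - 1) * N f
      + C * ‖f‖ / t * (1 / 2) ^ n := by
    intro n
    have htel : a 0 - a n = ∑ k ∈ Finset.range n, (a k - a (k + 1)) :=
      (Finset.sum_range_sub' a n).symm
    have h1 : ‖a 0 - a n‖ ≤ C * C' / (1 - r) * t ^ (α - 1) * N f := by
      rw [htel]
      calc ‖∑ k ∈ Finset.range n, (a k - a (k + 1))‖
          ≤ ∑ k ∈ Finset.range n, ‖a k - a (k + 1)‖ := norm_sum_le _ _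
        _ ≤ ∑ k ∈ Finset.range n, C * C' * r ^ k * t ^ (α - 1) * N f :=
            Finset.sum_le_sum fun k _ => hstep k
        _ = (∑ k ∈ Finset.range n, r ^ k) * (C * C' * t ^ (α - 1) * N f) := by
            rw [Finset.sum_mul]; congr 1; ext k; ring
        _ ≤ (1 - r)⁻¹ * (C * C' * t ^ (α - 1) * N f) := by
            apply mul_le_mul_of_nonneg_right (hgeom n)
            have := hN f
            positivity
        _ = C * C' / (1 - r) * t ^ (α - 1) * N f := by ring
    have h2 : ‖a n‖ ≤ C * ‖f‖ / t * (1 / 2) ^ n := by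
      have := hA ((2:ℝ) ^ n * t) (hpt n) f
      have heq : C / ((2:ℝ) ^ n * t) * ‖f‖ = C * ‖f‖ / t * (1 / 2) ^ n := by
        rw [div_pow, one_pow]
        rw [div_eq_mul_inv C, mul_inv, div_eq_mul_inv (C * ‖f‖)]
        ring
      rw [heq] at this
      exact this
    calc ‖a 0‖ ≤ ‖a 0 - a n‖ + ‖a n‖ := by
          have := norm_add_le (a 0 - a n) (a n); simpa using this
      _ ≤ C * C' / (1 - r) * t ^ (α - 1) * N f + C * ‖f‖ / t * (1 / 2) ^ n := by
          exact add_le_add h1 h2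
  have hlim : Filter.Tendsto (fun n : ℕ => C * C' / (1 - r) * t ^ (α - 1) * N f
      + C * ‖f‖ / t * (1 / 2) ^ n) Filter.atTop
      (nhds (C * C' / (1 - r) * t ^ (α - 1) * N f)) := by
    have h0 : Filter.Tendsto (fun n : ℕ => ((1:ℝ) / 2) ^ n) Filter.atTop (nhds 0) :=
      tendsto_pow_atTop_nhds_zero_of_lt_one (by norm_num) (by norm_num)
    have := (h0.const_mul (C * ‖f‖ / t)).const_add (C * C' / (1 - r) * t ^ (α - 1) * N f)
    simpa using this
  have hfin : ‖a 0‖ ≤ C * C' / (1 - r) * t ^ (α - 1) * N f :=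
    ge_of_tendsto hlim (Filter.Eventually.of_forall hbound)
  have ha0 : a 0 = A t f := by simp [ha]
  rw [ha0] at hfin
  exact hfin
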